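/- arXiv:2309.11459 — 4 statements merged into one kernel-verified Lean document; each statement's English description precedes it below -/
import Mathlib

section
/- The series of harmonic numbers over cubes satisfies ∑_{k=1}^∞ H_k / k³ = π⁴/72. -/
open Finset Real

namespace EulerSum72

noncomputable def A2 (n : ℕ) : ℝ := ∑ i ∈ Finset.range n, 1 / ((i : ℝ) + 1) ^ 2

lemma antidiag_key (f : ℕ × ℕ → ℝ) (hf : ∀ p, 0 ≤ f p) {L : ℝ}
    (h : HasSum (fun n => ∑ p ∈ Finset.HasAntidiagonal.antidiagonal n, f p) L) :
    HasSum f L := by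
  have he := (Finset.HasAntidiagonal.sigmaAntidiagonalEquivProd (A := ℕ)).hasSum_iff (f := f) (a := L)
  rw [← he]
  have hfib : ∀ n : ℕ, HasSum (fun c : (Finset.HasAntidiagonal.antidiagonal n : Finset (ℕ × ℕ)) =>
      f c) (∑ p ∈ Finset.HasAntidiagonal.antidiagonal n, f p) :=
    fun n => (Finset.HasAntidiagonal.antidiagonal n).hasSum f
  have hsum : Summable (fun x : (Σ n : ℕ, (Finset.HasAntidiagonal.antidiagonal n : Finset (ℕ × ℕ))) =>
      f (Finset.HasAntidiagonal.sigmaAntidiagonalEquivProd x)) := by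
    rw [summable_sigma_of_nonneg (fun _ => hf _)]
    constructor
    · exact fun n => (hfib n).summable
    · apply h.summable.congr
      intro n
      exact ((hfib n).tsum_eq).symm
  obtain ⟨S, hS⟩ := hsum
  have houter := hS.sigma (fun n => hfib n)
  exact (houter.unique h) ▸ hS

lemma key2 (a c : ℕ → ℝ) (ha : ∀ i, 0 ≤ a i) (hc : ∀ i, 0 ≤ c i) {L : ℝ}
    (h : HasSum (fun n => (∑ i ∈ Finset.range (n + 1), a i) * c n) L) :
    HasSum (fun p : ℕ × ℕ => a p.1 * c (p.1 + p.2)) L := by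
  apply antidiag_key _ (fun p => mul_nonneg (ha _) (hc _))
  apply h.congr_fun
  intro n
  rw [show (∑ p ∈ Finset.HasAntidiagonal.antidiagonal n, a p.1 * c (p.1 + p.2))
      = ∑ p ∈ Finset.HasAntidiagonal.antidiagonal n, a p.1 * c n from
    Finset.sum_congr rfl fun p hp => by rw [Finset.HasAntidiagonal.mem_antidiagonal.mp hp],
    Finset.Nat.sum_antidiagonal_eq_sum_range_succ_mk, ← Finset.sum_mul]

lemma h2 : HasSum (fun n : ℕ => 1 / ((n : ℝ) + 1) ^ 2) (π ^ 2 / 6) := by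
  have := (hasSum_nat_add_iff' (f := fun n : ℕ => 1 / (n : ℝ) ^ 2) 1).2 hasSum_zeta_two
  simp only [Finset.range_one, Finset.sum_singleton, Nat.cast_zero] at this
  norm_num at this
  exact this.congr_fun fun n => by ring

lemma h4 : HasSum (fun n : ℕ => 1 / ((n : ℝ) + 1) ^ 4) (π ^ 4 / 90) := by
  have := (hasSum_nat_add_iff' (f := fun n : ℕ => 1 / (n : ℝ) ^ 4) 1).2 hasSum_zeta_four
  simp only [Finset.range_one, Finset.sum_singleton, Nat.cast_zero] at this
  norm_num at this
  exact this.congr_fun fun n => by ring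

lemma A2_succ (n : ℕ) : A2 (n + 1) = A2 n + 1 / ((n : ℝ) + 1) ^ 2 := by
  rw [A2, A2, Finset.sum_range_succ]

lemma A2_nonneg (n : ℕ) : 0 ≤ A2 n :=
  Finset.sum_nonneg fun i _ => by positivity

lemma htel : HasSum (fun n => A2 (n + 1) ^ 2 - A2 n ^ 2) ((π ^ 2 / 6) ^ 2) := by
  rw [hasSum_iff_tendsto_nat_of_nonneg]
  · have h0 : ∀ n, ∑ i ∈ Finset.range n, (A2 (i + 1) ^ 2 - A2 i ^ 2) = A2 n ^ 2 := by
      intro n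
      rw [Finset.sum_range_sub (fun i => A2 i ^ 2)]
      simp [A2]
    simp only [h0]
    exact (h2.tendsto_sum_nat.congr fun n => rfl).pow 2
  · intro n
    have h1 : A2 n ≤ A2 (n + 1) := by
      rw [A2_succ]
      have : (0:ℝ) ≤ 1 / ((n:ℝ)+1)^2 := by positivity
      linarith
    nlinarith [A2_nonneg n]

lemma hT : HasSum (fun n : ℕ => A2 (n + 1) * (1 / ((n : ℝ) + 1) ^ 2))
    (((π ^ 2 / 6) ^ 2 + π ^ 4 / 90) / 2) := by
  have h := htel.add h4
  have h' : HasSum (fun n : ℕ => 2 * (A2 (n + 1) * (1 / ((n : ℝ) + 1) ^ 2)))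
      ((π ^ 2 / 6) ^ 2 + π ^ 4 / 90) := by
    apply h.congr_fun
    intro n
    rw [A2_succ n]
    have : ((n : ℝ) + 1) ≠ 0 := by positivity
    field_simp
    ring
  have := h'.div_const 2
  simp only [mul_comm, mul_div_assoc] at this
  convert this using 2 with n
  · rfl
  · ring

lemma harmonic_cast (n : ℕ) :
    (harmonic n : ℝ) = ∑ i ∈ Finset.range n, 1 / ((i : ℝ) + 1) := by
  rw [harmonic]
  push_cast
  exact Finset.sum_congr rfl fun i _ => by rw [one_div]

lemma hSsummable : Summable (fun k : ℕ => (harmonic (k + 1) : ℝ) / ((k : ℝ) + 1) ^ 3) := by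
  have hle : ∀ k : ℕ, (harmonic (k + 1) : ℝ) / ((k : ℝ) + 1) ^ 3 ≤ 1 / ((k : ℝ) + 1) ^ 2 := by
    intro k
    have hpos : (0:ℝ) < (k : ℝ) + 1 := by positivity
    have hH : (harmonic (k + 1) : ℝ) ≤ (k : ℝ) + 1 := by
      rw [harmonic_cast]
      calc ∑ i ∈ Finset.range (k+1), 1 / ((i : ℝ) + 1)
          ≤ ∑ i ∈ Finset.range (k+1), 1 := by
            apply Finset.sum_le_sum
            intro i _
            rw [div_le_one (by positivity)]
            linarith [Nat.cast_nonneg (α := ℝ) i]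
        _ = (k : ℝ) + 1 := by simp
    rw [div_le_div_iff₀ (by positivity) (by positivity)]
    nlinarith
  have hnn : ∀ k : ℕ, (0:ℝ) ≤ (harmonic (k + 1) : ℝ) / ((k : ℝ) + 1) ^ 3 := by
    intro k
    have := harmonic_pos (Nat.succ_ne_zero k)
    have h0 : (0:ℝ) ≤ (harmonic (k + 1) : ℝ) := by exact_mod_cast this.le
    positivity
  exact Summable.of_nonneg_of_le hnn hle h2.summable

lemma h4shift : HasSum (fun n : ℕ => 1 / ((n : ℝ) + 2) ^ 4) (π ^ 4 / 90 - 1) := by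
  have := (hasSum_nat_add_iff' (f := fun n : ℕ => 1 / ((n : ℝ) + 1) ^ 4) 1).2 h4
  simp only [Finset.range_one, Finset.sum_singleton, Nat.cast_zero] at this
  norm_num at this
  exact this.congr_fun fun n => by push_cast; ring_nf

lemma hG {S : ℝ} (hS : HasSum (fun k : ℕ => (harmonic (k + 1) : ℝ) / ((k : ℝ) + 1) ^ 3) S) :
    HasSum (fun n : ℕ => (harmonic (n + 1) : ℝ) * (1 / ((n : ℝ) + 2) ^ 3))
      (S - π ^ 4 / 90) := by
  have h1 := (hasSum_nat_add_iff'
      (f := fun k : ℕ => (harmonic (k + 1) : ℝ) / ((k : ℝ) + 1) ^ 3) 1).2 hS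
  simp only [Finset.range_one, Finset.sum_singleton, Nat.cast_zero] at h1
  norm_num [harmonic_succ] at h1
  have h2' := h1.sub h4shift
  have : S - 1 - (π ^ 4 / 90 - 1) = S - π ^ 4 / 90 := by ring
  rw [this] at h2'
  apply h2'.congr_fun
  intro n
  have hne : ((n : ℝ) + 2) ≠ 0 := by positivity
  rw [harmonic_succ n]
  push_cast
  field_simp
  ring

lemma hB : HasSum (fun n : ℕ => A2 (n + 1) * (1 / ((n : ℝ) + 2) ^ 2))
    (((π ^ 2 / 6) ^ 2 + π ^ 4 / 90) / 2 - π ^ 4 / 90) := by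
  have h1 := (hasSum_nat_add_iff'
      (f := fun n : ℕ => A2 (n + 1) * (1 / ((n : ℝ) + 1) ^ 2)) 1).2 hT
  simp only [Finset.range_one, Finset.sum_singleton, Nat.cast_zero] at h1
  have hA21 : A2 1 = 1 := by simp [A2]
  rw [hA21] at h1
  norm_num at h1
  have h2' := h1.sub h4shift
  have heq : ((π ^ 2 / 6) ^ 2 + π ^ 4 / 90) / 2 - 1 - (π ^ 4 / 90 - 1)
      = ((π ^ 2 / 6) ^ 2 + π ^ 4 / 90) / 2 - π ^ 4 / 90 := by ring
  rw [heq] at h2'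
  apply h2'.congr_fun
  intro n
  have hne : ((n : ℝ) + 2) ≠ 0 := by positivity
  rw [A2_succ (n + 1)]
  push_cast
  field_simp
  ring

lemma hGprod {S : ℝ} (hS : HasSum (fun k : ℕ => (harmonic (k + 1) : ℝ) / ((k : ℝ) + 1) ^ 3) S) :
    HasSum (fun p : ℕ × ℕ =>
      (1 / ((p.1 : ℝ) + 1)) * (1 / ((p.1 : ℝ) + (p.2 : ℝ) + 2) ^ 3)) (S - π ^ 4 / 90) := by
  have h := (hG hS).congr_fun (g := fun n : ℕ =>
      (∑ i ∈ Finset.range (n + 1), 1 / ((i : ℝ) + 1)) * (1 / ((n : ℝ) + 2) ^ 3))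
    (fun n => by rw [harmonic_cast])
  have hk := key2 (fun i => 1 / ((i : ℝ) + 1)) (fun n => 1 / ((n : ℝ) + 2) ^ 3)
    (fun i => by positivity) (fun i => by positivity) h
  apply hk.congr_fun
  intro p
  push_cast
  ring

lemma hBprod :
    HasSum (fun p : ℕ × ℕ =>
      (1 / ((p.1 : ℝ) + 1) ^ 2) * (1 / ((p.1 : ℝ) + (p.2 : ℝ) + 2) ^ 2))
      (((π ^ 2 / 6) ^ 2 + π ^ 4 / 90) / 2 - π ^ 4 / 90) := by
  have h := hB.congr_fun (g := fun n : ℕ =>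
      (∑ i ∈ Finset.range (n + 1), 1 / ((i : ℝ) + 1) ^ 2) * (1 / ((n : ℝ) + 2) ^ 2))
    (fun n => by simp only [A2])
  have hk := key2 (fun i => 1 / ((i : ℝ) + 1) ^ 2) (fun n => 1 / ((n : ℝ) + 2) ^ 2)
    (fun i => by positivity) (fun i => by positivity) h
  apply hk.congr_fun
  intro p
  push_cast
  ring

set_option maxHeartbeats 1000000 in
theorem aux :
    ∑' k : ℕ, (harmonic (k + 1) : ℝ) / ((k : ℝ) + 1) ^ 3 = Real.pi ^ 4 / 72 := by
  set S := ∑' k : ℕ, (harmonic (k + 1) : ℝ) / ((k : ℝ) + 1) ^ 3 with hSdef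
  have hS : HasSum (fun k : ℕ => (harmonic (k + 1) : ℝ) / ((k : ℝ) + 1) ^ 3) S :=
    hSsummable.hasSum
  have hGp := hGprod hS
  have hGp' : HasSum (fun p : ℕ × ℕ =>
      (1 / ((p.2 : ℝ) + 1)) * (1 / ((p.1 : ℝ) + (p.2 : ℝ) + 2) ^ 3)) (S - π ^ 4 / 90) := by
    have := ((Equiv.prodComm ℕ ℕ).hasSum_iff).2 hGp
    apply this.congr_fun
    intro p
    simp only [Function.comp_apply, Equiv.prodComm_apply, Prod.fst_swap, Prod.snd_swap]
    ring
  have hBp := hBprod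
  have hBp' : HasSum (fun p : ℕ × ℕ =>
      (1 / ((p.2 : ℝ) + 1) ^ 2) * (1 / ((p.1 : ℝ) + (p.2 : ℝ) + 2) ^ 2))
      (((π ^ 2 / 6) ^ 2 + π ^ 4 / 90) / 2 - π ^ 4 / 90) := by
    have := ((Equiv.prodComm ℕ ℕ).hasSum_iff).2 hBp
    apply this.congr_fun
    intro p
    simp only [Function.comp_apply, Equiv.prodComm_apply, Prod.fst_swap, Prod.snd_swap]
    ring
  have hAA : HasSum (fun p : ℕ × ℕ =>
      1 / (((p.1 : ℝ) + 1) * ((p.2 : ℝ) + 1) * ((p.1 : ℝ) + (p.2 : ℝ) + 2) ^ 2))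
      (2 * (S - π ^ 4 / 90)) := by
    have h := hGp.add hGp'
    have heq : S - π ^ 4 / 90 + (S - π ^ 4 / 90) = 2 * (S - π ^ 4 / 90) := by ring
    rw [heq] at h
    apply h.congr_fun
    intro p
    have h1 : ((p.1 : ℝ) + 1) ≠ 0 := by positivity
    have h2 : ((p.2 : ℝ) + 1) ≠ 0 := by positivity
    have h3 : ((p.1 : ℝ) + (p.2 : ℝ) + 2) ≠ 0 := by positivity
    field_simp
    ring
  have hZ2sq : HasSum (fun p : ℕ × ℕ => (1 / ((p.1 : ℝ) + 1) ^ 2) * (1 / ((p.2 : ℝ) + 1) ^ 2))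
      (π ^ 2 / 6 * (π ^ 2 / 6)) :=
    h2.mul h2 (h2.summable.mul_of_nonneg h2.summable
      (fun i => by positivity) (fun i => by positivity))
  have hRHS := (hBp.add hBp').add (hAA.mul_left 2)
  have hpt : ∀ p : ℕ × ℕ,
      (1 / ((p.1 : ℝ) + 1) ^ 2) * (1 / ((p.2 : ℝ) + 1) ^ 2) =
      (1 / ((p.1 : ℝ) + 1) ^ 2) * (1 / ((p.1 : ℝ) + (p.2 : ℝ) + 2) ^ 2) +
      (1 / ((p.2 : ℝ) + 1) ^ 2) * (1 / ((p.1 : ℝ) + (p.2 : ℝ) + 2) ^ 2) +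
      2 * (1 / (((p.1 : ℝ) + 1) * ((p.2 : ℝ) + 1) * ((p.1 : ℝ) + (p.2 : ℝ) + 2) ^ 2)) := by
    intro p
    have h1 : ((p.1 : ℝ) + 1) ≠ 0 := by positivity
    have h2 : ((p.2 : ℝ) + 1) ≠ 0 := by positivity
    have h3 : ((p.1 : ℝ) + (p.2 : ℝ) + 2) ≠ 0 := by positivity
    field_simp
    ring
  have hfinal : π ^ 2 / 6 * (π ^ 2 / 6) =
      (((π ^ 2 / 6) ^ 2 + π ^ 4 / 90) / 2 - π ^ 4 / 90) +
      (((π ^ 2 / 6) ^ 2 + π ^ 4 / 90) / 2 - π ^ 4 / 90) +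
      2 * (2 * (S - π ^ 4 / 90)) := by
    refine (hZ2sq.congr_fun (fun p => (hpt p).symm)).unique hRHS
  nlinarith [hfinal]

end EulerSum72

/-- The series of harmonic numbers over cubes: `∑_{k=1}^∞ H_k / k³ = π⁴/72`. -/
theorem stmt_0 :
    ∑' k : ℕ, (harmonic (k + 1) : ℝ) / ((k : ℝ) + 1) ^ 3 = Real.pi ^ 4 / 72 := by
  exact EulerSum72.aux
end

section
/- The series ∑_{k=1}^∞ H_k / (2k-1)³ equals -π²/4 + π⁴/64 + 2·ln 2 + (7/4)·ζ(3) - (7/4)·ln 2 · ζ(3). -/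
open Real Filter Finset Topology

namespace StmtAux

/-! ### Basic summability -/

lemma sum_shift (s : ℕ) (hs : 1 < s) : Summable (fun n : ℕ => 1 / ((n : ℝ) + 1) ^ s) := by
  have h := (summable_one_div_nat_pow (p := s)).2 hs
  have := (summable_nat_add_iff (f := fun n : ℕ => 1 / (n : ℝ) ^ s) 1).2 h
  simpa using this

lemma sum_odd (s : ℕ) (hs : 1 < s) : Summable (fun i : ℕ => 1 / (2 * (i : ℝ) + 1) ^ s) := by
  refine Summable.of_nonneg_of_le (fun i => by positivity) (fun i => ?_) (sum_shift s hs)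
  apply one_div_le_one_div_of_le (by positivity)
  apply pow_le_pow_left₀ (by positivity)
  linarith [Nat.cast_nonneg (α := ℝ) i]

/-! ### Zeta shift and parity split -/

lemma shift_eq (s : ℕ) (hs : 1 < s) :
    ∑' n : ℕ, 1 / (n : ℝ) ^ s = ∑' n : ℕ, 1 / ((n : ℝ) + 1) ^ s := by
  have hfull : Summable (fun n : ℕ => 1 / (n : ℝ) ^ s) := (summable_one_div_nat_pow).2 hs
  have h0 : ∑' n : ℕ, 1 / (n : ℝ) ^ s = ∑ i ∈ range 1, 1 / (i : ℝ) ^ s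
      + ∑' n : ℕ, 1 / ((n + 1 : ℕ) : ℝ) ^ s := (Summable.sum_add_tsum_nat_add 1 hfull).symm
  have hz0 : (0:ℝ)^s = 0 := by apply zero_pow; omega
  have h00 : ∑ i ∈ range 1, 1 / (i : ℝ) ^ s = 0 := by simp [hz0]
  rw [h0, h00, zero_add]
  congr 1; funext n; push_cast; ring_nf

lemma odd_sum_eq (s : ℕ) (hs : 1 < s) :
    ∑' i : ℕ, 1 / (2 * (i : ℝ) + 1) ^ s
      = (1 - (1:ℝ)/2^s) * ∑' n : ℕ, 1 / ((n : ℝ) + 1) ^ s := by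
  have hfull : Summable (fun n : ℕ => 1 / (n : ℝ) ^ s) := (summable_one_div_nat_pow).2 hs
  have heven : Summable (fun k : ℕ => 1 / ((2 * k : ℕ) : ℝ) ^ s) := by
    refine Summable.of_nonneg_of_le (fun i => by positivity) (fun i => ?_) (hfull)
    rcases Nat.eq_zero_or_pos i with h | h
    · subst h; simp
    · apply one_div_le_one_div_of_le (by positivity)
      apply pow_le_pow_left₀ (by positivity)
      push_cast; linarith [Nat.one_le_cast (α := ℝ) |>.2 h]
  have hodd : Summable (fun k : ℕ => 1 / ((2 * k + 1 : ℕ) : ℝ) ^ s) := by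
    have := sum_odd s hs
    refine this.congr fun i => by push_cast; ring_nf
  have hsplit := tsum_even_add_odd (f := fun n : ℕ => 1 / (n : ℝ) ^ s) heven hodd
  have he : ∑' k : ℕ, 1 / ((2 * k : ℕ) : ℝ) ^ s = (1/2^s) * ∑' n : ℕ, 1 / (n : ℝ) ^ s := by
    rw [← tsum_mul_left]
    congr 1; funext k
    push_cast
    rcases Nat.eq_zero_or_pos k with h | h
    · subst h
      rw [Nat.cast_zero, mul_zero, zero_pow (by omega : s ≠ 0)]
      simp
    · rw [mul_pow]
      have : ((k:ℝ))^s ≠ 0 := by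
        apply pow_ne_zero
        exact ne_of_gt (by exact_mod_cast h)
      field_simp
  have ho : ∑' i : ℕ, 1 / (2 * (i : ℝ) + 1) ^ s = ∑' k : ℕ, 1 / ((2 * k + 1 : ℕ) : ℝ) ^ s := by
    congr 1; funext k; push_cast; ring_nf
  rw [ho]
  have hthis := hsplit
  rw [he, shift_eq s hs] at hthis
  linarith [hthis]

/-! ### The alternating harmonic series -/

lemma alt_partial (n : ℕ) :
    ∑ k ∈ range n, (1 / (2 * (k : ℝ) + 1) - 1 / (2 * (k : ℝ) + 2))
      = (harmonic (2 * n) : ℝ) - harmonic n := by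
  induction n with
  | zero => simp
  | succ n ih =>
    rw [Finset.sum_range_succ, ih]
    have h2 : 2 * (n + 1) = (2 * n + 1) + 1 := by ring
    rw [h2, harmonic_succ, harmonic_succ, harmonic_succ]
    push_cast
    field_simp
    ring

lemma tendsto_two_mul : Tendsto (fun n : ℕ => 2 * n) atTop atTop :=
  tendsto_atTop_atTop_of_monotone (fun a b h => by omega) (fun b => ⟨b, by omega⟩)

lemma tendsto_H2 : Tendsto (fun n : ℕ => (harmonic (2 * n) : ℝ) - harmonic n) atTop (𝓝 (log 2)) := by
  have h1 : Tendsto (fun n : ℕ => ((harmonic (2 * n) : ℝ) - log (2 * n + 1)))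
      atTop (𝓝 eulerMascheroniConstant) := by
    have := Real.tendsto_harmonic_sub_log_add_one.comp tendsto_two_mul
    refine this.congr (fun n => ?_)
    simp only [Function.comp]
    push_cast
    ring_nf
  have h2 := Real.tendsto_harmonic_sub_log_add_one
  have h3 : Tendsto (fun n : ℕ => log ((2 * (n : ℝ) + 1) / ((n : ℝ) + 1))) atTop (𝓝 (log 2)) := by
    have hq : Tendsto (fun n : ℕ => (2 * (n : ℝ) + 1) / ((n : ℝ) + 1)) atTop (𝓝 2) := by
      have he : ∀ n : ℕ, (2 * (n : ℝ) + 1) / ((n : ℝ) + 1) = 2 - 1 / ((n : ℝ) + 1) := by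
        intro n
        have : ((n : ℝ) + 1) ≠ 0 := by positivity
        field_simp
        ring
      simp only [he]
      have := tendsto_one_div_add_atTop_nhds_zero_nat (𝕜 := ℝ)
      simpa using (tendsto_const_nhds (x := (2:ℝ)) (f := atTop)).sub this
    exact ((Real.continuousAt_log (by norm_num)).tendsto.comp hq)
  have key : ∀ n : ℕ, (harmonic (2 * n) : ℝ) - harmonic n
      = ((harmonic (2 * n) : ℝ) - log (2 * n + 1)) - ((harmonic n : ℝ) - log (n + 1))
        + log ((2 * (n : ℝ) + 1) / ((n : ℝ) + 1)) := by
    intro n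
    rw [Real.log_div (by positivity) (by positivity)]
    push_cast
    ring
  simp only [key]
  have := (h1.sub h2).add h3
  simpa using this

lemma hasSum_log2 :
    HasSum (fun k : ℕ => 1 / (2 * (k : ℝ) + 1) - 1 / (2 * (k : ℝ) + 2)) (log 2) := by
  rw [hasSum_iff_tendsto_nat_of_nonneg]
  · exact Tendsto.congr (fun n => (alt_partial n).symm) tendsto_H2
  · intro k
    have h1 : (0:ℝ) < 2 * (k : ℝ) + 1 := by positivity
    have := one_div_le_one_div_of_le h1 (by linarith : 2 * (k : ℝ) + 1 ≤ 2 * (k : ℝ) + 2)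
    linarith

/-! ### Telescoping -/

lemma hasSum_tel1 (g : ℕ → ℝ) (hlim : Tendsto g atTop (𝓝 0)) (hmono : ∀ j, g (j+1) ≤ g j) :
    HasSum (fun j => g j - g (j+1)) (g 0) := by
  rw [hasSum_iff_tendsto_nat_of_nonneg (fun j => by linarith [hmono j])]
  have h : ∀ n, ∑ i ∈ range n, (g i - g (i+1)) = g 0 - g n := fun n => Finset.sum_range_sub' g n
  simp only [h]
  simpa using (tendsto_const_nhds (x := g 0) (f := atTop)).sub hlim

lemma hasSum_tel (m : ℕ) (g : ℕ → ℝ) (hlim : Tendsto g atTop (𝓝 0)) (hmono : ∀ j, g (j+1) ≤ g j) :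
    HasSum (fun j => g j - g (j+m)) (∑ i ∈ range m, g i) := by
  induction m generalizing g with
  | zero => simpa using hasSum_zero
  | succ m ih =>
    have h1 := hasSum_tel1 g hlim hmono
    have h2 := ih (fun j => g (j+1)) (hlim.comp (tendsto_add_atTop_nat 1)) (fun j => hmono (j+1))
    have h3 := h1.add h2
    have hs : g 0 + ∑ i ∈ range m, g (i+1) = ∑ i ∈ range (m+1), g i := by
      rw [Finset.sum_range_succ' g m]; ring
    rw [hs] at h3
    convert h3 using 1
    funext j
    have hj : j + 1 + m = j + (m+1) := by omega
    rw [← hj]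
    ring

/-! ### Shifted alternating series and inner sums -/

lemma alt_partial' (n : ℕ) :
    ∑ k ∈ range n, (1 / (2 * (k : ℝ) + 2) - 1 / (2 * (k : ℝ) + 3))
      = 1 + (harmonic n : ℝ) - harmonic (2 * n + 1) := by
  induction n with
  | zero => simp [harmonic_succ]
  | succ n ih =>
    rw [Finset.sum_range_succ, ih]
    have h2 : 2 * (n + 1) + 1 = (2 * n + 2) + 1 := by ring
    have h3 : (2 * n + 2) = (2 * n + 1) + 1 := by ring
    rw [h2, h3]
    simp only [harmonic_succ]
    push_cast
    field_simp
    ring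

lemma tendsto_odd_inv : Tendsto (fun n : ℕ => 1 / (2 * (n : ℝ) + 1)) atTop (𝓝 0) := by
  apply squeeze_zero (fun n => by positivity) (fun n => ?_)
    tendsto_one_div_add_atTop_nhds_zero_nat
  apply one_div_le_one_div_of_le (by positivity)
  linarith [Nat.cast_nonneg (α := ℝ) n]

lemma hasSum_log2' :
    HasSum (fun k : ℕ => 1 / (2 * (k : ℝ) + 2) - 1 / (2 * (k : ℝ) + 3)) (1 - log 2) := by
  rw [hasSum_iff_tendsto_nat_of_nonneg]
  · have key : Tendsto (fun n : ℕ => 1 + (harmonic n : ℝ) - harmonic (2 * n + 1)) atTop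
        (𝓝 (1 - log 2)) := by
      have h1 : ∀ n : ℕ, 1 + (harmonic n : ℝ) - harmonic (2 * n + 1)
          = 1 - ((harmonic (2*n) : ℝ) - harmonic n) - 1 / (2 * (n:ℝ) + 1) := by
        intro n
        rw [harmonic_succ]
        push_cast
        ring
      simp only [h1]
      have := ((tendsto_const_nhds (x := (1:ℝ)) (f := atTop (α := ℕ))).sub tendsto_H2).sub
        tendsto_odd_inv
      simpa using this
    exact Tendsto.congr (fun n => (alt_partial' n).symm) key
  · intro k
    have h1 : (0:ℝ) < 2 * (k : ℝ) + 2 := by positivity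
    have := one_div_le_one_div_of_le h1 (by linarith : 2 * (k : ℝ) + 2 ≤ 2 * (k : ℝ) + 3)
    linarith

lemma tendsto_g3 : Tendsto (fun j : ℕ => 1 / (2 * (j : ℝ) + 3)) atTop (𝓝 0) := by
  apply squeeze_zero (fun n => by positivity) (fun n => ?_)
    tendsto_one_div_add_atTop_nhds_zero_nat
  apply one_div_le_one_div_of_le (by positivity)
  linarith [Nat.cast_nonneg (α := ℝ) n]

lemma innerA (m : ℕ) :
    HasSum (fun j : ℕ => 1 / (2 * (j : ℝ) + 2) - 1 / (2 * (j : ℝ) + 2 * (m : ℝ) + 3))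
      ((∑ i ∈ range (m+1), 1 / (2 * (i : ℝ) + 1)) - log 2) := by
  have htel := hasSum_tel m (fun j => 1 / (2 * (j : ℝ) + 3)) tendsto_g3
    (fun j => by
      apply one_div_le_one_div_of_le (by positivity)
      push_cast; linarith)
  have hadd := hasSum_log2'.add htel
  have he : (fun j : ℕ => (1 / (2 * (j : ℝ) + 2) - 1 / (2 * (j : ℝ) + 3))
      + (1 / (2 * (j : ℝ) + 3) - 1 / (2 * ((j + m : ℕ) : ℝ) + 3)))
      = fun j : ℕ => 1 / (2 * (j : ℝ) + 2) - 1 / (2 * (j : ℝ) + 2 * (m : ℝ) + 3) := by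
    funext j; push_cast; ring_nf
  rw [he] at hadd
  have hsum : (1 - log 2) + ∑ i ∈ range m, 1 / (2 * (i : ℝ) + 3)
      = (∑ i ∈ range (m+1), 1 / (2 * (i : ℝ) + 1)) - log 2 := by
    rw [Finset.sum_range_succ' (fun i => 1 / (2 * (i : ℝ) + 1)) m]
    push_cast
    ring_nf
  rwa [hsum] at hadd

/-! ### Triangle-product swap -/

noncomputable def φ : ℕ × ℕ → ℕ × ℕ := fun p => (p.1, p.1 + 1 + p.2)

lemma φ_inj : Function.Injective φ := by
  rintro ⟨a, b⟩ ⟨c, d⟩ h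
  simp only [φ, Prod.mk.injEq] at h
  obtain ⟨h1, h2⟩ := h
  exact Prod.ext h1 (by omega)

lemma tri (g : ℕ → ℕ → ℝ)
    (hs : Summable fun p : ℕ × ℕ => g p.1 (p.1 + 1 + p.2)) :
    ∑' n : ℕ, ∑ i ∈ range n, g i n = ∑' p : ℕ × ℕ, g p.1 (p.1 + 1 + p.2) := by
  classical
  set H : ℕ × ℕ → ℝ := fun q => if q.1 < q.2 then g q.1 q.2 else 0 with hH
  have hcomp : (H ∘ φ) = fun p : ℕ × ℕ => g p.1 (p.1 + 1 + p.2) := by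
    funext p
    simp only [H, φ, Function.comp]
    rw [if_pos (by omega)]
  have hrange : ∀ q ∉ Set.range φ, H q = 0 := by
    rintro ⟨i, n⟩ hq
    by_contra h
    have hlt : i < n := by
      by_contra hge
      exact h (if_neg hge)
    exact hq ⟨(i, n - i - 1), by simp [φ]; omega⟩
  have hsupp : Function.support H ⊆ Set.range φ := by
    intro q hq
    by_contra h
    exact hq (hrange q h)
  have hsumH : Summable H := (φ_inj.summable_iff hrange).1 (by rw [hcomp]; exact hs)
  have h1 : ∑' p : ℕ × ℕ, g p.1 (p.1 + 1 + p.2) = ∑' q, H q := by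
    rw [← hcomp]
    exact φ_inj.tsum_eq hsupp
  have h2 : ∑' q, H q = ∑' i : ℕ, ∑' n : ℕ, H (i, n) := Summable.tsum_prod hsumH
  have h3 : ∑' n : ℕ, ∑' i : ℕ, H (i, n) = ∑' i : ℕ, ∑' n : ℕ, H (i, n) :=
    Summable.tsum_comm (f := fun i n => H (i, n)) (by exact hsumH)
  have h4 : ∀ n : ℕ, ∑' i : ℕ, H (i, n) = ∑ i ∈ range n, g i n := by
    intro n
    rw [tsum_eq_sum (s := range n) (fun i hi => ?_)]
    · apply Finset.sum_congr rfl
      intro i hi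
      simp only [H]
      rw [if_pos (Finset.mem_range.1 hi)]
    · simp only [H]
      rw [if_neg]
      simpa using hi
  rw [h1, h2, ← h3]
  exact tsum_congr fun n => (h4 n).symm

/-! ### Symmetric square -/

lemma symsq (x : ℕ → ℝ) (hx0 : ∀ i, 0 ≤ x i) (hx : Summable x) :
    ∑' m : ℕ, (x m * ∑ i ∈ range (m+1), x i)
      = ((∑' i, x i) ^ 2 + ∑' i, x i * x i) / 2 := by
  set X := ∑' i, x i with hX
  have hxsq : Summable fun i => x i * x i := by
    refine Summable.of_nonneg_of_le (fun i => mul_nonneg (hx0 i) (hx0 i)) (fun i => ?_)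
      (hx.mul_left (X))
    have hle : x i ≤ X := by
      have := Summable.sum_le_tsum (range (i+1)) (fun j _ => hx0 j) hx
      calc x i ≤ ∑ j ∈ range (i+1), x j :=
            Finset.single_le_sum (fun j _ => hx0 j) (by simp)
        _ ≤ X := this
    calc x i * x i ≤ X * x i := mul_le_mul_of_nonneg_right hle (hx0 i)
      _ = X * x i := rfl
  have hprod : Summable fun q : ℕ × ℕ => x q.1 * x q.2 :=
    hx.mul_of_nonneg hx (fun i => hx0 i) (fun i => hx0 i)
  have hpull : Summable fun p : ℕ × ℕ => x p.1 * x (p.1 + 1 + p.2) := by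
    have := hprod.comp_injective φ_inj
    exact this
  have htri := tri (fun i n => x i * x n) hpull
  have hSm : ∀ i : ℕ, ∑' s : ℕ, x (s + (i+1)) = X - ∑ t ∈ range (i+1), x t := by
    intro i
    have := Summable.sum_add_tsum_nat_add (f := x) (i+1) hx
    linarith [this]
  have hA_supp : Summable fun m => x m * ∑ i ∈ range (m+1), x i := by
    refine Summable.of_nonneg_of_le (fun m => mul_nonneg (hx0 m)
      (Finset.sum_nonneg fun j _ => hx0 j)) (fun m => ?_) (hx.mul_right X)
    exact mul_le_mul_of_nonneg_left (Summable.sum_le_tsum _ (fun j _ => hx0 j) hx) (hx0 m)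
  set A := ∑' m : ℕ, (x m * ∑ i ∈ range (m+1), x i) with hA
  have hrhs : ∑' p : ℕ × ℕ, x p.1 * x (p.1 + 1 + p.2) = X * X - A := by
    rw [Summable.tsum_prod hpull]
    have h5 : ∀ i : ℕ, ∑' s : ℕ, x i * x (i + 1 + s) = x i * (X - ∑ t ∈ range (i+1), x t) := by
      intro i
      rw [tsum_mul_left]
      congr 1
      rw [← hSm i]
      congr 1; funext s; congr 1; omega
    rw [tsum_congr h5]
    have hsub : (fun i => x i * (X - ∑ t ∈ range (i+1), x t))
        = fun i => x i * X - x i * ∑ t ∈ range (i+1), x t := by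
      funext i; ring
    rw [hsub, Summable.tsum_sub (hx.mul_right X) hA_supp, tsum_mul_right]
  have hlhs : ∑' n : ℕ, ∑ i ∈ range n, x i * x n = A - ∑' i, x i * x i := by
    have hpt : ∀ n : ℕ, ∑ i ∈ range n, x i * x n
        = (x n * ∑ i ∈ range (n+1), x i) - x n * x n := by
      intro n
      rw [Finset.sum_range_succ, mul_add, Finset.mul_sum]
      simp_rw [mul_comm (x n)]
      ring
    rw [tsum_congr hpt]
    exact Summable.tsum_sub hA_supp hxsq
  rw [hlhs, hrhs] at htri
  nlinarith [htri]


/-! ### The double-sum machinery for `T = ∑ H_n/(2n+1)³` -/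

noncomputable def f2 (i : ℕ) : ℝ := 1 / (2 * (i : ℝ) + 1) ^ 2
noncomputable def f3 (i : ℕ) : ℝ := 1 / (2 * (i : ℝ) + 1) ^ 3
noncomputable def f4 (i : ℕ) : ℝ := 1 / (2 * (i : ℝ) + 1) ^ 4
noncomputable def Oh (m : ℕ) : ℝ := ∑ i ∈ range m, 1 / (2 * (i : ℝ) + 1)
noncomputable def Qh (m : ℕ) : ℝ := ∑ i ∈ range m, f2 i

lemma sumf2 : Summable f2 := sum_odd 2 (by norm_num)
lemma sumf3 : Summable f3 := sum_odd 3 (by norm_num)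
lemma sumf4 : Summable f4 := sum_odd 4 (by norm_num)

lemma f2f2 (i : ℕ) : f2 i * f2 i = f4 i := by
  simp only [f2, f4]
  rw [one_div_mul_one_div, ← pow_add]

lemma f3mul (i : ℕ) : f3 i * (1 / (2 * (i : ℝ) + 1)) = f4 i := by
  simp only [f3, f4]
  rw [one_div_mul_one_div, ← pow_succ]

lemma Oh_le (m : ℕ) : Oh (m+1) ≤ 2 * (m : ℝ) + 1 := by
  have h1 : Oh (m+1) ≤ ∑ i ∈ range (m+1), (1:ℝ) := by
    apply Finset.sum_le_sum
    intro i _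
    rw [div_le_one (by positivity)]
    linarith [Nat.cast_nonneg (α := ℝ) i]
  simp only [Finset.sum_const, card_range, nsmul_eq_mul, mul_one] at h1
  push_cast at h1
  linarith [Nat.cast_nonneg (α := ℝ) m]

lemma Oh_nonneg (m : ℕ) : 0 ≤ Oh m :=
  Finset.sum_nonneg fun i _ => by positivity

lemma sumW : Summable fun m : ℕ => Oh (m+1) * f3 m := by
  refine Summable.of_nonneg_of_le (fun m => mul_nonneg (Oh_nonneg _) (by simp only [f3]; positivity))
    (fun m => ?_) sumf2
  have h1 : Oh (m+1) * f3 m ≤ (2 * (m:ℝ) + 1) * f3 m :=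
    mul_le_mul_of_nonneg_right (Oh_le m) (by simp only [f3]; positivity)
  have h2 : (2 * (m:ℝ) + 1) * f3 m = f2 m := by
    simp only [f2, f3]
    have : (2 * (m:ℝ) + 1) ≠ 0 := by positivity
    field_simp
  linarith

/-! The four double-indexed families.  `p.1 = j`, `p.2 = m`. -/

noncomputable def g0 (p : ℕ × ℕ) : ℝ :=
  1 / (((p.1:ℝ)+1) * (2*(p.1:ℝ)+2*(p.2:ℝ)+3)^3)
noncomputable def g1 (p : ℕ × ℕ) : ℝ :=
  2/(2*(p.2:ℝ)+1)^3 * (1/(2*(p.1:ℝ)+2) - 1/(2*(p.1:ℝ)+2*(p.2:ℝ)+3))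
noncomputable def g2 (p : ℕ × ℕ) : ℝ :=
  2/((2*(p.2:ℝ)+1)^2 * (2*(p.1:ℝ)+2*(p.2:ℝ)+3)^2)
noncomputable def g3f (p : ℕ × ℕ) : ℝ :=
  2/((2*(p.2:ℝ)+1) * (2*(p.1:ℝ)+2*(p.2:ℝ)+3)^3)

lemma sumMj : Summable (fun p : ℕ × ℕ => 1/((p.1:ℝ)+1)^2 * (1/(2*(p.2:ℝ)+1)^2)) := by
  apply Summable.mul_of_nonneg (sum_shift 2 (by norm_num)) (sum_odd 2 (by norm_num)) <;>
    (intro i; positivity)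

lemma keyid (x d : ℝ) (hx : 1 ≤ x) (hd : 1 ≤ d) :
    1/(x*(2*x+d)^3) = 2/d^3 * (1/(2*x) - 1/(2*x+d)) - 2/(d^2*(2*x+d)^2) - 2/(d*(2*x+d)^3) := by
  have hx0 : (0:ℝ) < x := by linarith
  have hd0 : (0:ℝ) < d := by linarith
  have hb0 : (0:ℝ) < 2*x+d := by linarith
  field_simp
  ring

lemma g1_alt (x d : ℝ) (hx : 1 ≤ x) (hd : 1 ≤ d) :
    2/d^3 * (1/(2*x) - 1/(2*x+d)) = 1/(d^2*x*(2*x+d)) := by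
  have hx0 : (0:ℝ) < x := by linarith
  have hd0 : (0:ℝ) < d := by linarith
  have hb0 : (0:ℝ) < 2*x+d := by linarith
  field_simp
  ring

lemma bound0 (x d : ℝ) (hx : 1 ≤ x) (hd : 1 ≤ d) : 1/(x*(2*x+d)^3) ≤ 1/x^2 * (1/d^2) := by
  have hx0 : (0:ℝ) < x := by linarith
  have hd0 : (0:ℝ) < d := by linarith
  rw [one_div_mul_one_div]
  apply one_div_le_one_div_of_le (by positivity)
  nlinarith [sq_nonneg x, sq_nonneg d, mul_pos hx0 hd0, sq_nonneg (x*d), sq_nonneg (x+d)]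

lemma bound1 (x d : ℝ) (hx : 1 ≤ x) (hd : 1 ≤ d) : 1/(d^2*x*(2*x+d)) ≤ 1/x^2 * (1/d^2) := by
  have hx0 : (0:ℝ) < x := by linarith
  have hd0 : (0:ℝ) < d := by linarith
  rw [one_div_mul_one_div]
  apply one_div_le_one_div_of_le (by positivity)
  nlinarith [mul_pos hx0 hd0, sq_nonneg d]

lemma bound2 (x d : ℝ) (hx : 1 ≤ x) (hd : 1 ≤ d) : 2/(d^2*(2*x+d)^2) ≤ 1/x^2 * (1/d^2) := by
  have hx0 : (0:ℝ) < x := by linarith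
  have hd0 : (0:ℝ) < d := by linarith
  rw [one_div_mul_one_div, div_le_div_iff₀ (by positivity) (by positivity)]
  nlinarith [sq_nonneg x, sq_nonneg d, mul_pos hx0 hd0]

lemma bound3 (x d : ℝ) (hx : 1 ≤ x) (hd : 1 ≤ d) : 2/(d*(2*x+d)^3) ≤ 1/x^2 * (1/d^2) := by
  have hx0 : (0:ℝ) < x := by linarith
  have hd0 : (0:ℝ) < d := by linarith
  rw [one_div_mul_one_div, div_le_div_iff₀ (by positivity) (by positivity)]
  nlinarith [sq_nonneg x, sq_nonneg d, mul_pos hx0 hd0, mul_pos (mul_pos hx0 hx0) hd0]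

lemma hx1 (p : ℕ × ℕ) : (1:ℝ) ≤ (p.1:ℝ) + 1 := by
  linarith [Nat.cast_nonneg (α := ℝ) p.1]
lemma hd1 (p : ℕ × ℕ) : (1:ℝ) ≤ 2*(p.2:ℝ) + 1 := by
  linarith [Nat.cast_nonneg (α := ℝ) p.2]
lemma hbe (p : ℕ × ℕ) : 2*(p.1:ℝ)+2*(p.2:ℝ)+3 = 2*((p.1:ℝ)+1) + (2*(p.2:ℝ)+1) := by ring
lemma h2e (p : ℕ × ℕ) : 2*(p.1:ℝ)+2 = 2*((p.1:ℝ)+1) := by ring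

lemma sum_g0 : Summable g0 := by
  refine Summable.of_nonneg_of_le (fun p => by simp only [g0]; positivity) (fun p => ?_) sumMj
  simp only [g0]
  rw [hbe p]
  exact bound0 _ _ (hx1 p) (hd1 p)

lemma sum_g1 : Summable g1 := by
  refine Summable.of_nonneg_of_le (fun p => ?_) (fun p => ?_) sumMj
  · simp only [g1]
    have h1 : 1/(2*(p.1:ℝ)+2*(p.2:ℝ)+3) ≤ 1/(2*(p.1:ℝ)+2) := by
      apply one_div_le_one_div_of_le (by positivity)
      linarith [Nat.cast_nonneg (α := ℝ) p.2]
    have h2 : (0:ℝ) ≤ 2/(2*(p.2:ℝ)+1)^3 := by positivity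
    nlinarith
  · simp only [g1]
    rw [hbe p, h2e p, g1_alt _ _ (hx1 p) (hd1 p)]
    exact bound1 _ _ (hx1 p) (hd1 p)

lemma sum_g2 : Summable g2 := by
  refine Summable.of_nonneg_of_le (fun p => by simp only [g2]; positivity) (fun p => ?_) sumMj
  simp only [g2]
  rw [hbe p]
  exact bound2 _ _ (hx1 p) (hd1 p)

lemma sum_g3f : Summable g3f := by
  refine Summable.of_nonneg_of_le (fun p => by simp only [g3f]; positivity) (fun p => ?_) sumMj
  simp only [g3f]
  rw [hbe p]
  exact bound3 _ _ (hx1 p) (hd1 p)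

lemma g0_split (p : ℕ × ℕ) : g0 p = g1 p - g2 p - g3f p := by
  simp only [g0, g1, g2, g3f]
  rw [hbe p, h2e p]
  exact keyid _ _ (hx1 p) (hd1 p)

/-- swap to `m`-outer iterated sums -/
lemma swap_eval (f : ℕ × ℕ → ℝ) (hf : Summable f) :
    ∑' p : ℕ × ℕ, f p = ∑' m : ℕ, ∑' j : ℕ, f (j, m) := by
  have he := (Equiv.prodComm ℕ ℕ).tsum_eq f
  have hs : Summable (fun q : ℕ × ℕ => f (q.2, q.1)) := by
    have := (Equiv.prodComm ℕ ℕ).summable_iff (f := f)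
    exact this.2 hf
  rw [← he]
  exact Summable.tsum_prod hs

/-! ### Evaluations of the three pieces -/

lemma eval_g1 : ∑' p : ℕ × ℕ, g1 p
    = 2*(∑' m, Oh (m+1) * f3 m) - 2*Real.log 2*(∑' i, f3 i) := by
  rw [swap_eval g1 sum_g1]
  have hin : ∀ m : ℕ, ∑' j, g1 (j, m) = 2/(2*(m:ℝ)+1)^3 * (Oh (m+1) - Real.log 2) := by
    intro m
    have h : (fun j : ℕ => g1 (j, m))
        = fun j : ℕ => 2/(2*(m:ℝ)+1)^3 * (1/(2*(j:ℝ)+2) - 1/(2*(j:ℝ)+2*(m:ℝ)+3)) := by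
      funext j; simp only [g1]
    rw [h, tsum_mul_left, (innerA m).tsum_eq, Oh]
  rw [tsum_congr hin]
  have hpt : ∀ m : ℕ, 2/(2*(m:ℝ)+1)^3 * (Oh (m+1) - Real.log 2)
      = 2*(Oh (m+1) * f3 m) - (2*Real.log 2) * f3 m := by
    intro m
    simp only [f3]
    ring
  rw [tsum_congr hpt, Summable.tsum_sub (sumW.mul_left 2) (sumf3.mul_left (2*Real.log 2)),
    tsum_mul_left, tsum_mul_left]

lemma sumQf : Summable fun m : ℕ => f2 m * Qh (m+1) := by
  refine Summable.of_nonneg_of_le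
    (fun m => mul_nonneg (by simp only [f2]; positivity)
      (Finset.sum_nonneg fun i _ => by simp only [f2]; positivity))
    (fun m => ?_) (sumf2.mul_right (∑' i, f2 i))
  exact mul_le_mul_of_nonneg_left
    (Summable.sum_le_tsum _ (fun i _ => by simp only [f2]; positivity) sumf2)
    (by simp only [f2]; positivity)

lemma eval_g2 : ∑' p : ℕ × ℕ, g2 p = (∑' i, f2 i)^2 - ∑' i, f4 i := by
  rw [swap_eval g2 sum_g2]
  set l2 := ∑' i, f2 i with hl2
  have hin : ∀ m : ℕ, ∑' j, g2 (j, m) = 2/(2*(m:ℝ)+1)^2 * (l2 - Qh (m+1)) := by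
    intro m
    have hpt : (fun j : ℕ => g2 (j, m)) = fun j => 2/(2*(m:ℝ)+1)^2 * f2 (j + (m+1)) := by
      funext j
      simp only [g2, f2]
      push_cast
      rw [div_mul_div_comm]
      congr 1
      · ring
      · ring
    rw [hpt, tsum_mul_left]
    have hshift := Summable.sum_add_tsum_nat_add (f := f2) (m+1) sumf2
    have h2 : ∑' j : ℕ, f2 (j + (m+1)) = l2 - Qh (m+1) := by
      simp only [Qh] at *
      linarith [hshift]
    rw [h2]
  rw [tsum_congr hin]
  have hpt2 : ∀ m : ℕ, 2/(2*(m:ℝ)+1)^2 * (l2 - Qh (m+1))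
      = (2*l2) * f2 m - 2*(f2 m * Qh (m+1)) := by
    intro m
    simp only [f2]
    ring
  rw [tsum_congr hpt2, Summable.tsum_sub (sumf2.mul_left (2*l2)) (sumQf.mul_left 2),
    tsum_mul_left, tsum_mul_left]
  have hsym := symsq f2 (fun i => by simp only [f2]; positivity) sumf2
  have hQ : ∑' m : ℕ, (f2 m * ∑ i ∈ range (m+1), f2 i) = ∑' m : ℕ, f2 m * Qh (m+1) :=
    tsum_congr fun m => rfl
  rw [hQ] at hsym
  have hf4 : ∑' i, f2 i * f2 i = ∑' i, f4 i := tsum_congr f2f2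
  rw [hsym, hf4]
  ring

noncomputable def gg3 (t n : ℕ) : ℝ := 2/((2*(t:ℝ)+1) * (2*(n:ℝ)+1)^3)

lemma gg3_eq (p : ℕ × ℕ) : gg3 p.1 (p.1 + 1 + p.2) = g3f (p.2, p.1) := by
  simp only [gg3, g3f]
  have h : (2*((p.1 + 1 + p.2 : ℕ):ℝ)+1) = 2*(p.2:ℝ)+2*(p.1:ℝ)+3 := by push_cast; ring
  rw [h]

lemma eval_g3f : ∑' p : ℕ × ℕ, g3f p
    = 2*(∑' m, Oh (m+1) * f3 m) - 2*(∑' i, f4 i) := by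
  have hswap : Summable (fun q : ℕ × ℕ => g3f (q.2, q.1)) :=
    ((Equiv.prodComm ℕ ℕ).summable_iff (f := g3f)).2 sum_g3f
  have hsum' : Summable (fun p : ℕ × ℕ => gg3 p.1 (p.1 + 1 + p.2)) :=
    hswap.congr (fun p => (gg3_eq p).symm)
  have htri := tri gg3 hsum'
  have h2 : ∑' p : ℕ × ℕ, gg3 p.1 (p.1 + 1 + p.2) = ∑' p, g3f p := by
    rw [tsum_congr gg3_eq]
    exact (Equiv.prodComm ℕ ℕ).tsum_eq g3f
  rw [h2] at htri
  rw [← htri]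
  have hrow : ∀ n : ℕ, ∑ t ∈ range n, gg3 t n = (2 * f3 n) * Oh n := by
    intro n
    simp only [Oh, f3, gg3, Finset.mul_sum]
    apply Finset.sum_congr rfl
    intro t _
    have ht2 : (2*(t:ℝ)+1) ≠ 0 := by positivity
    have hn2 : (2*(n:ℝ)+1) ≠ 0 := by positivity
    field_simp
  rw [tsum_congr hrow]
  have hpt : ∀ n : ℕ, (2 * f3 n) * Oh n = 2*(Oh (n+1) * f3 n) - 2 * f4 n := by
    intro n
    have hO : Oh (n+1) = Oh n + 1/(2*(n:ℝ)+1) := by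
      simp only [Oh]
      rw [Finset.sum_range_succ]
    rw [hO, ← f3mul n]
    ring
  rw [tsum_congr hpt, Summable.tsum_sub (sumW.mul_left 2) (sumf4.mul_left 2), tsum_mul_left, tsum_mul_left]

/-! ### Evaluation of `T` -/

lemma harm_cast (n : ℕ) : (harmonic n : ℝ) = ∑ i ∈ range n, 1/((i:ℝ)+1) := by
  unfold harmonic
  push_cast
  apply Finset.sum_congr rfl
  intro i _
  rw [one_div]

noncomputable def gg0 (i n : ℕ) : ℝ := 1/(((i:ℝ)+1) * (2*(n:ℝ)+1)^3)

lemma gg0_eq (p : ℕ × ℕ) : gg0 p.1 (p.1 + 1 + p.2) = g0 p := by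
  simp only [gg0, g0]
  have h : (2*((p.1 + 1 + p.2 : ℕ):ℝ)+1) = 2*(p.1:ℝ)+2*(p.2:ℝ)+3 := by push_cast; ring
  rw [h]

lemma T_eval : ∑' n : ℕ, (harmonic n : ℝ) / (2*(n:ℝ)+1)^3
    = 3*(∑' i, f4 i) - (∑' i, f2 i)^2 - 2*Real.log 2*(∑' i, f3 i) := by
  have h1 : ∀ n : ℕ, (harmonic n : ℝ) / (2*(n:ℝ)+1)^3 = ∑ i ∈ range n, gg0 i n := by
    intro n
    rw [harm_cast, Finset.sum_div]
    apply Finset.sum_congr rfl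
    intro i _
    rw [gg0, div_div]
  have hsum' : Summable (fun p : ℕ × ℕ => gg0 p.1 (p.1 + 1 + p.2)) :=
    sum_g0.congr (fun p => (gg0_eq p).symm)
  have htri := tri gg0 hsum'
  have h2 : ∑' p : ℕ × ℕ, gg0 p.1 (p.1 + 1 + p.2) = ∑' p, g0 p := tsum_congr gg0_eq
  rw [tsum_congr h1, htri, h2, tsum_congr g0_split,
    Summable.tsum_sub (sum_g1.sub sum_g2) sum_g3f, Summable.tsum_sub sum_g1 sum_g2,
    eval_g1, eval_g2, eval_g3f]
  ring

/-! ### Evaluation of `U` -/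

lemma U_eval : ∑' k : ℕ, 1/(((k:ℝ)+1) * (2*(k:ℝ)+1)^3)
    = 2*(∑' i, f3 i) - 2*(∑' i, f2 i) + 2*Real.log 2 := by
  have hpt : ∀ k : ℕ, 1/(((k:ℝ)+1) * (2*(k:ℝ)+1)^3)
      = (2*f3 k - 2*f2 k) + 2*(1/(2*(k:ℝ)+1) - 1/(2*(k:ℝ)+2)) := by
    intro k
    simp only [f2, f3]
    have h1 : ((k:ℝ)+1) ≠ 0 := by positivity
    have h2 : (2*(k:ℝ)+1) ≠ 0 := by positivity
    have h3 : (2*(k:ℝ)+2) ≠ 0 := by positivity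
    field_simp
    ring
  have hsub : Summable fun k => 2*f3 k - 2*f2 k := (sumf3.mul_left 2).sub (sumf2.mul_left 2)
  have halt : Summable fun k : ℕ => 2*(1/(2*(k:ℝ)+1) - 1/(2*(k:ℝ)+2)) :=
    hasSum_log2.summable.mul_left 2
  rw [tsum_congr hpt, Summable.tsum_add hsub halt, Summable.tsum_sub (sumf3.mul_left 2) (sumf2.mul_left 2),
    tsum_mul_left, tsum_mul_left, tsum_mul_left, hasSum_log2.tsum_eq]

/-! ### Summability of the main series -/

lemma harm_le (n : ℕ) : (harmonic n : ℝ) ≤ n := by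
  rw [harm_cast]
  have h1 : ∑ i ∈ range n, 1/((i:ℝ)+1) ≤ ∑ i ∈ range n, (1:ℝ) := by
    apply Finset.sum_le_sum
    intro i _
    rw [div_le_one (by positivity)]
    linarith [Nat.cast_nonneg (α := ℝ) i]
  simpa using h1

lemma harm_nonneg' (n : ℕ) : (0:ℝ) ≤ (harmonic n : ℝ) := by
  rw [harm_cast]
  exact Finset.sum_nonneg fun i _ => by positivity

lemma sumT : Summable fun n : ℕ => (harmonic n : ℝ) / (2*(n:ℝ)+1)^3 := by
  refine Summable.of_nonneg_of_le (fun n => div_nonneg (harm_nonneg' n) (by positivity))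
    (fun n => ?_) sumf2
  have hh : (harmonic n : ℝ) ≤ 2*(n:ℝ)+1 := by
    have := harm_le n
    linarith [Nat.cast_nonneg (α := ℝ) n]
  have h1 : (harmonic n : ℝ) / (2*(n:ℝ)+1)^3 ≤ (2*(n:ℝ)+1) / (2*(n:ℝ)+1)^3 := by
    gcongr
  have h2 : (2*(n:ℝ)+1) / (2*(n:ℝ)+1)^3 = f2 n := by
    simp only [f2]
    have : (2*(n:ℝ)+1) ≠ 0 := by positivity
    field_simp
  linarith

lemma sumU : Summable fun k : ℕ => 1/(((k:ℝ)+1) * (2*(k:ℝ)+1)^3) := by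
  refine Summable.of_nonneg_of_le (fun k => by positivity) (fun k => ?_) sumf3
  simp only [f3]
  apply one_div_le_one_div_of_le (by positivity)
  have h1 : (1:ℝ) ≤ (k:ℝ)+1 := by linarith [Nat.cast_nonneg (α := ℝ) k]
  nlinarith [pow_pos (by positivity : (0:ℝ) < 2*(k:ℝ)+1) 3]

end StmtAux

open StmtAux in
/-- `∑_{k=1}^∞ H_k/(2k-1)³ = -π²/4 + π⁴/64 + 2 ln 2 + (7/4)ζ(3) - (7/4) ln 2 · ζ(3)`. -/
theorem stmt_1 :
    ∑' k : ℕ, (harmonic (k + 1) : ℝ) / (2 * (k : ℝ) + 1) ^ 3 =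
      -Real.pi ^ 2 / 4 + Real.pi ^ 4 / 64 + 2 * Real.log 2
        + (7 / 4) * (∑' n : ℕ, 1 / ((n : ℝ) + 1) ^ 3)
        - (7 / 4) * Real.log 2 * (∑' n : ℕ, 1 / ((n : ℝ) + 1) ^ 3) := by
  classical
  -- split each term:  H_{k+1}/(2k+1)³ = H_k/(2k+1)³ + 1/((k+1)(2k+1)³)
  have hpt : ∀ k : ℕ, (harmonic (k + 1) : ℝ) / (2 * (k : ℝ) + 1) ^ 3
      = (harmonic k : ℝ) / (2*(k:ℝ)+1)^3 + 1/(((k:ℝ)+1) * (2*(k:ℝ)+1)^3) := by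
    intro k
    rw [harmonic_succ]
    push_cast
    have h1 : ((k:ℝ)+1) ≠ 0 := by positivity
    have h2 : (2*(k:ℝ)+1) ≠ 0 := by positivity
    field_simp
  rw [tsum_congr hpt, Summable.tsum_add sumT sumU, T_eval, U_eval]
  -- zeta values
  have hZ2 : ∑' n : ℕ, 1/((n:ℝ)+1)^2 = Real.pi^2/6 := by
    rw [← shift_eq 2 (by norm_num)]
    exact hasSum_zeta_two.tsum_eq
  have hZ4 : ∑' n : ℕ, 1/((n:ℝ)+1)^4 = Real.pi^4/90 := by
    rw [← shift_eq 4 (by norm_num)]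
    exact hasSum_zeta_four.tsum_eq
  have hl2 : ∑' i, f2 i = Real.pi^2/8 := by
    have h := odd_sum_eq 2 (by norm_num)
    rw [hZ2] at h
    simp only [f2]
    rw [h]
    ring
  have hl4 : ∑' i, f4 i = Real.pi^4/96 := by
    have h := odd_sum_eq 4 (by norm_num)
    rw [hZ4] at h
    simp only [f4]
    rw [h]
    ring
  have hl3 : ∑' i, f3 i = (7/8) * ∑' n : ℕ, 1 / ((n : ℝ) + 1) ^ 3 := by
    have h := odd_sum_eq 3 (by norm_num)
    simp only [f3]
    rw [h]
    ring
  rw [hl2, hl3, hl4]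
  ring
end

section
/- Let a be a complex number with |a| = 1 that is not a nonpositive real number. Then Li₄(-1/a) + Li₄(-a) = -7π⁴/360 - (π²/12)·(log a)² - (log a)⁴/24. -/
open Complex Real

lemma bernoulliFun_four (x : ℝ) : bernoulliFun 4 x = x^4 - 2*x^3 + x^2 - 1/30 := by
  simp [bernoulliFun, Polynomial.bernoulli, Finset.sum_range_succ,
    bernoulli_eq_bernoulli'_of_ne_one, bernoulli'_two, bernoulli'_three, bernoulli'_four,
    bernoulli_zero, bernoulli_one]
  norm_num [Nat.choose]
  ring

lemma summable_aux (z : ℂ) (hz : ‖z‖ = 1) :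
    Summable (fun n : ℕ => z ^ (n+1) / ((n:ℂ)+1)^4) := by
  apply Summable.of_norm
  have he : (fun n : ℕ => ‖z ^ (n+1) / ((n:ℂ)+1)^4‖) = fun n : ℕ => 1/((n:ℝ)+1)^4 := by
    funext n
    rw [norm_div, norm_pow, norm_pow]
    have h1 : ‖z‖ = 1 := hz
    have h2 : ‖(n:ℂ)+1‖ = (n:ℝ)+1 := by
      rw [show ((n:ℂ)+1) = ((n+1:ℕ):ℂ) by push_cast; ring, Complex.norm_natCast]
      push_cast; ring
    rw [h1, h2, one_pow, one_div]
  rw [he]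
  have := (summable_nat_add_iff (f := fun n : ℕ => 1/(n:ℝ)^4) 1).mpr
    (Real.summable_one_div_nat_pow.mpr (by norm_num))
  convert this using 2 with n
  · rfl
  · push_cast; ring

/-- The polylogarithm `Li_s(z) = ∑_{k=1}^∞ z^k / k^s`. -/
noncomputable def Li (s : ℕ) (z : ℂ) : ℂ := ∑' k : ℕ, z ^ (k + 1) / ((k : ℂ) + 1) ^ s

/-- Jonquière's inversion formula of order 4: for `|a| = 1`, `a` not a nonpositive real,
`Li₄(-1/a) + Li₄(-a) = -7π⁴/360 - (π²/12)(log a)² - (log a)⁴/24`. -/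
theorem stmt_13 (a : ℂ) (ha : ‖a‖ = 1) (hs : a ∈ Complex.slitPlane) :
    Li 4 (-1 / a) + Li 4 (-a) =
      -7 * (Real.pi : ℂ) ^ 4 / 360 - ((Real.pi : ℂ) ^ 2 / 12) * Complex.log a ^ 2
        - Complex.log a ^ 4 / 24 := by
  have hπ : (0:ℝ) < π := Real.pi_pos
  set θ : ℝ := a.arg with hθdef
  set x : ℝ := (θ + π) / (2 * π) with hxdef
  have hθ1 : -π < θ := Complex.neg_pi_lt_arg a
  have hθ2 : θ ≤ π := Complex.arg_le_pi a
  have hx : x ∈ Set.Icc (0:ℝ) 1 := by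
    constructor
    · apply div_nonneg (by linarith) (by linarith)
    · rw [div_le_one (by linarith)]; linarith
  have ha0 : a ≠ 0 := by
    intro h; rw [h] at ha; simp at ha
  have hπC : (π:ℂ) ≠ 0 := Complex.ofReal_ne_zero.mpr hπ.ne'
  have hexp : Complex.exp (θ * Complex.I) = a := by
    conv_rhs => rw [← Complex.norm_mul_exp_arg_mul_I a]
    rw [ha, Complex.ofReal_one, one_mul]
  have hlog : Complex.log a = θ * Complex.I := by
    rw [Complex.log, ha, Real.log_one, Complex.ofReal_zero, zero_add]
  have hfa : Complex.exp (2 * (π:ℂ) * Complex.I * x) = -a := by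
    have hx2 : 2 * (π:ℂ) * Complex.I * x = θ * Complex.I + π * Complex.I := by
      rw [hxdef]; push_cast; field_simp
    rw [hx2, Complex.exp_add, hexp, Complex.exp_pi_mul_I]
    ring
  have hfa' : Complex.exp (-(2 * (π:ℂ) * Complex.I * x)) = -1 / a := by
    rw [Complex.exp_neg, hfa]
    field_simp
  have h := hasSum_one_div_nat_pow_mul_fourier (k := 4) (by norm_num) hx
  have key : HasSum (fun n : ℕ => ((-a) ^ n + (-1/a) ^ n) / (n:ℂ) ^ 4)
      (-(2 * π * Complex.I) ^ 4 / (Nat.factorial 4 : ℕ) * bernoulliFun 4 x) := by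
    refine (h.congr_fun fun n => ?_)
    have e1 : ((fourier (n:ℤ)) (x : UnitAddCircle) : ℂ) = (-a) ^ n := by
      rw [fourier_coe_apply]
      rw [show 2*(π:ℂ)*Complex.I*(n:ℤ)*x/(1:ℝ) = n*(2*(π:ℂ)*Complex.I*x) by push_cast; ring,
        Complex.exp_nat_mul, hfa]
    have e2 : ((fourier (-(n:ℤ))) (x : UnitAddCircle) : ℂ) = (-1/a) ^ n := by
      rw [fourier_coe_apply]
      push_cast
      rw [show 2*(π:ℂ)*Complex.I*(-(n:ℂ))*x/1 = n*(-(2*(π:ℂ)*Complex.I*x)) by ring,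
        Complex.exp_nat_mul, hfa']
    rw [e1, e2]
    ring
  have key2 := (hasSum_nat_add_iff' (f := fun n : ℕ => ((-a) ^ n + (-1/a) ^ n) / (n:ℂ) ^ 4) 1).mpr key
  simp only [Finset.range_one, Finset.sum_singleton, Nat.cast_zero] at key2
  rw [show ((0:ℂ)^4) = 0 by norm_num, div_zero, sub_zero] at key2
  have key3 : HasSum (fun n : ℕ => (-1/a) ^ (n+1) / ((n:ℂ)+1)^4 + (-a) ^ (n+1) / ((n:ℂ)+1)^4)
      (-(2 * π * Complex.I) ^ 4 / (Nat.factorial 4 : ℕ) * bernoulliFun 4 x) := by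
    refine key2.congr_fun fun n => ?_
    push_cast
    ring
  have h1 := summable_aux (-1/a) (by rw [norm_div, ha]; simp)
  have h2 := summable_aux (-a) (by rw [norm_neg, ha])
  rw [Li, Li, ← Summable.tsum_add h1 h2, key3.tsum_eq, bernoulliFun_four, hlog]
  have eP : (2*(π:ℂ)*Complex.I)^4 = 16*(π:ℂ)^4 := by
    rw [show (2*(π:ℂ)*Complex.I)^4 = 2^4*(π:ℂ)^4*(Complex.I^2)^2 by ring, Complex.I_sq]
    ring
  have e2 : ((θ:ℂ)*Complex.I)^2 = -(θ:ℂ)^2 := by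
    rw [mul_pow, Complex.I_sq]; ring
  have e4 : ((θ:ℂ)*Complex.I)^4 = (θ:ℂ)^4 := by
    rw [show ((θ:ℂ)*Complex.I)^4 = (θ:ℂ)^4*(Complex.I^2)^2 by ring, Complex.I_sq]; ring
  rw [eP, e2, e4, show ((Nat.factorial 4 : ℕ):ℂ) = 24 by norm_num [Nat.factorial]]
  have hxC : 2*(π:ℂ)*(x:ℂ) = (θ:ℂ)+(π:ℂ) := by
    rw [hxdef]; push_cast; field_simp
  push_cast
  linear_combination (-(2*(π:ℂ)*(x:ℂ))^3/24 - (2*(π:ℂ)*(x:ℂ))^2*((θ:ℂ)+π)/24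
    - (2*(π:ℂ)*(x:ℂ))*((θ:ℂ)+π)^2/24 - ((θ:ℂ)+π)^3/24
    + (2*(π:ℂ)*(x:ℂ))^2*(4*(π:ℂ))/24 + (2*(π:ℂ)*(x:ℂ))*((θ:ℂ)+π)*(4*π)/24
    + ((θ:ℂ)+π)^2*(4*π)/24 - (2*(π:ℂ)*(x:ℂ))*(4*(π:ℂ)^2)/24 - ((θ:ℂ)+π)*(4*π^2)/24) * hxC
end

section
/- Let r and s be real numbers with r > 0 and s < r, and let m be a complex number with Re(m) > 1. Then ∑_{k=1}^∞ ζ(m, (rk-s)/r) / (rk-s)^m = (1/(2 r^m)) · ( ζ(m, (r-s)/r)² + ζ(2m, (r-s)/r) ), where all complex powers of the positive real quantities rk-s and r are principal powers. -/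
/-- The Hurwitz zeta function `ζ(m, z) = ∑_{n=0}^∞ (n+z)^{-m}` for real `z > 0`,
using principal complex powers of the positive real base. -/
noncomputable def hzeta (m : ℂ) (z : ℝ) : ℂ := ∑' n : ℕ, (((n : ℝ) + z : ℝ) : ℂ) ^ (-m)

lemma summable_norm_aux {a : ℝ} (ha : 0 < a) {m : ℂ} (hm : 1 < m.re) :
    Summable (fun n : ℕ => ‖(((n : ℝ) + a : ℝ) : ℂ) ^ (-m)‖) := by
  have h := (Real.summable_one_div_nat_add_rpow a m.re).mpr hm
  refine h.congr fun n => ?_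
  have hpos : (0:ℝ) < (n : ℝ) + a := by positivity
  rw [Complex.norm_cpow_eq_rpow_re_of_pos hpos, Complex.neg_re,
    Real.rpow_neg hpos.le, abs_of_pos hpos, one_div]

/-- Pairs `(a,b)` with `a ≤ b`, parametrized as `(k, k+i)`. -/
def eqLe : ℕ × ℕ ≃ ↥{p : ℕ × ℕ | p.1 ≤ p.2} where
  toFun p := ⟨(p.1, p.1 + p.2), Nat.le_add_right _ _⟩
  invFun x := (x.1.1, x.1.2 - x.1.1)
  left_inv p := by obtain ⟨x, y⟩ := p; simp
  right_inv x := by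
    obtain ⟨⟨u, v⟩, hx⟩ := x
    simp only [Set.mem_setOf_eq] at hx
    apply Subtype.ext
    show (u, u + (v - u)) = (u, v)
    exact Prod.ext_iff.mpr ⟨rfl, by omega⟩

/-- Pairs `(a,b)` with `a > b`, parametrized as `(k+i+1, k)`. -/
def eqGt : ℕ × ℕ ≃ ↥({p : ℕ × ℕ | p.1 ≤ p.2}ᶜ) where
  toFun p := ⟨(p.1 + p.2 + 1, p.1), by simp only [Set.mem_compl_iff, Set.mem_setOf_eq]; omega⟩
  invFun x := (x.1.2, x.1.1 - x.1.2 - 1)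
  left_inv p := by
    obtain ⟨x, y⟩ := p
    show (x, x + y + 1 - x - 1) = (x, y)
    exact Prod.ext_iff.mpr ⟨rfl, by omega⟩
  right_inv x := by
    obtain ⟨⟨u, v⟩, hx⟩ := x
    simp only [Set.mem_compl_iff, Set.mem_setOf_eq, not_le] at hx
    apply Subtype.ext
    show (v + (u - v - 1) + 1, v) = (u, v)
    exact Prod.ext_iff.mpr ⟨by omega, rfl⟩

/-- For `r > 0`, `s < r`, `Re(m) > 1`:
`∑_{k=1}^∞ ζ(m,(rk-s)/r)/(rk-s)^m = (1/(2r^m))(ζ(m,(r-s)/r)² + ζ(2m,(r-s)/r))`. -/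
theorem stmt_16 (r s : ℝ) (hr : 0 < r) (hs : s < r) (m : ℂ) (hm : 1 < m.re) :
    ∑' k : ℕ, hzeta m ((r * ((k : ℝ) + 1) - s) / r) / ((r * ((k : ℝ) + 1) - s : ℝ) : ℂ) ^ m =
      1 / (2 * ((r : ℝ) : ℂ) ^ m) *
        ((hzeta m ((r - s) / r)) ^ 2 + hzeta (2 * m) ((r - s) / r)) := by
  set a : ℝ := (r - s) / r with ha_def
  have ha : 0 < a := div_pos (by linarith) hr
  set f : ℕ → ℂ := fun n => (((n : ℝ) + a : ℝ) : ℂ) ^ (-m) with hf_def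
  have hfs : Summable (fun n : ℕ => ‖f n‖) := summable_norm_aux ha hm
  have hf : Summable f := hfs.of_norm
  set F : ℕ × ℕ → ℂ := fun p => f p.1 * f p.2 with hF_def
  have hF : Summable F := summable_mul_of_summable_norm hfs hfs
  set g1 : ℕ × ℕ → ℂ := fun p => f p.1 * f (p.1 + p.2) with hg1_def
  set g2 : ℕ × ℕ → ℂ := fun p => f p.1 * f (p.1 + p.2 + 1) with hg2_def
  have hg1 : Summable g1 := by
    have he : g1 = F ∘ (fun p : ℕ × ℕ => (p.1, p.1 + p.2)) := rfl
    rw [he]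
    exact hF.comp_injective (fun p q h => by
      obtain ⟨h1, h2⟩ := Prod.ext_iff.1 h
      ext <;> omega)
  have hg2 : Summable g2 := by
    have he : g2 = F ∘ (fun p : ℕ × ℕ => (p.1, p.1 + p.2 + 1)) := rfl
    rw [he]
    exact hF.comp_injective (fun p q h => by
      obtain ⟨h1, h2⟩ := Prod.ext_iff.1 h
      ext <;> omega)
  have hdiag : Summable (fun k : ℕ => f k * f k) := by
    have he : (fun k : ℕ => f k * f k) = F ∘ (fun k : ℕ => (k, k)) := rfl
    rw [he]
    exact hF.comp_injective (fun p q h => (Prod.ext_iff.1 h).1)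
  have hAsum : ∑' x : ↥{p : ℕ × ℕ | p.1 ≤ p.2}, F ↑x = ∑' p, g1 p := by
    rw [← Equiv.tsum_eq eqLe (fun x : ↥{p : ℕ × ℕ | p.1 ≤ p.2} => F ↑x)]
    exact tsum_congr fun c => rfl
  have hBsum : ∑' x : ↥({p : ℕ × ℕ | p.1 ≤ p.2}ᶜ), F ↑x = ∑' p, g2 p := by
    rw [← Equiv.tsum_eq eqGt (fun x : ↥({p : ℕ × ℕ | p.1 ≤ p.2}ᶜ) => F ↑x)]
    exact tsum_congr fun p => mul_comm (f (p.1 + p.2 + 1)) (f p.1)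
  have hsplit : ∑' p : ℕ × ℕ, F p = ∑' p, g1 p + ∑' p, g2 p := by
    rw [← hAsum, ← hBsum]
    exact (Summable.tsum_add_tsum_compl (hF.subtype _) (hF.subtype _)).symm
  have hT : ∑' p, g1 p = (∑' k, f k * f k) + ∑' p, g2 p := by
    rw [Summable.tsum_prod hg1, Summable.tsum_prod hg2, ← Summable.tsum_add hdiag hg2.prod]
    refine tsum_congr fun k => ?_
    rw [Summable.tsum_eq_zero_add (hg1.prod_factor k)]
    have h0 : g1 (k, 0) = f k * f k := rfl
    have hsucc : ∀ i : ℕ, g1 (k, i + 1) = g2 (k, i) := fun i => by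
      show f k * f (k + (i + 1)) = f k * f (k + i + 1)
      rw [← add_assoc]
    simp only [h0, hsucc]
  have hD : ∑' k, f k * f k = hzeta (2 * m) a := by
    rw [hzeta]
    refine tsum_congr fun k => ?_
    have hx0 : (((k : ℝ) + a : ℝ) : ℂ) ≠ 0 := by
      rw [Complex.ofReal_ne_zero]
      positivity
    have hexp : -(2 * m) = -m + -m := by ring
    rw [hexp, Complex.cpow_add _ _ hx0]
  have hSS : hzeta m a * hzeta m a = ∑' p : ℕ × ℕ, F p := by
    have h := tsum_mul_tsum_of_summable_norm hfs hfs
    rw [hzeta]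
    exact h
  have hterm : ∀ k : ℕ,
      hzeta m ((r * ((k : ℝ) + 1) - s) / r) / ((r * ((k : ℝ) + 1) - s : ℝ) : ℂ) ^ m
        = 1 / ((r : ℝ) : ℂ) ^ m * ∑' i, g1 (k, i) := by
    intro k
    have hpos : (0:ℝ) < (k : ℝ) + a := by positivity
    have harg : (r * ((k : ℝ) + 1) - s) / r = (k : ℝ) + a := by
      rw [ha_def]; field_simp; ring
    have hmulr : (r * ((k : ℝ) + 1) - s : ℝ) = r * ((k : ℝ) + a) := by
      rw [ha_def]; field_simp; ring
    have hz : hzeta m ((k : ℝ) + a) = ∑' n, f (k + n) := by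
      rw [hzeta]
      refine tsum_congr fun n => ?_
      have hc : ((n : ℝ) + ((k : ℝ) + a)) = (((k + n : ℕ) : ℝ) + a) := by
        push_cast; ring
      show ((((n : ℝ) + ((k : ℝ) + a)) : ℝ) : ℂ) ^ (-m)
          = (((((k + n : ℕ) : ℝ) + a) : ℝ) : ℂ) ^ (-m)
      rw [hc]
    have hden : ((r * ((k : ℝ) + 1) - s : ℝ) : ℂ) ^ m
        = ((r : ℝ) : ℂ) ^ m * ((((k : ℝ) + a : ℝ)) : ℂ) ^ m := by
      rw [hmulr, Complex.ofReal_mul, Complex.mul_cpow_ofReal_nonneg hr.le hpos.le]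
    have hsum : ∑' i, g1 (k, i) = (∑' n, f (k + n)) * f k := by
      simp only [hg1_def]
      rw [tsum_mul_left, mul_comm]
    have hfk : f k = (((((k : ℝ) + a : ℝ)) : ℂ) ^ m)⁻¹ := Complex.cpow_neg _ _
    rw [harg, hz, hden, hsum, hfk, div_eq_mul_inv, mul_inv]
    ring
  calc ∑' k : ℕ, hzeta m ((r * ((k : ℝ) + 1) - s) / r) / ((r * ((k : ℝ) + 1) - s : ℝ) : ℂ) ^ m
      = ∑' k : ℕ, 1 / ((r : ℝ) : ℂ) ^ m * ∑' i, g1 (k, i) := tsum_congr hterm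
    _ = 1 / ((r : ℝ) : ℂ) ^ m * ∑' p, g1 p := by
        rw [tsum_mul_left, Summable.tsum_prod hg1]
    _ = 1 / (2 * ((r : ℝ) : ℂ) ^ m) *
        ((hzeta m ((r - s) / r)) ^ 2 + hzeta (2 * m) ((r - s) / r)) := by
        rw [← ha_def, sq]
        have h1 : hzeta m a * hzeta m a = ∑' p, g1 p + (∑' p, g1 p - hzeta (2 * m) a) := by
          rw [hSS, hsplit]
          congr 1
          rw [hT, hD]
          ring
        rw [h1]
        ring
end
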